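/- Let θ : ℝ → ℝ be continuous, e : [0,T] → ℝ integrable with ē = 0, ε* > 0, ε ∈ (0, ε*] and λ ∈ (0,1]. Let R₁ be the unique positive root of x^{p_-} − ‖e‖_{L¹} T^{(p_- − 1)/p_-} x − T = 0, set R₂ = T^{(p_- − 1)/p_-} R₁ and R₃ = max{ ‖e‖_{L¹} + R₂ · max_{|v| ≤ R₂} |θ(v)| + ε* R₂ T , 1 }. Then every solution u of the periodic problem (φ_{p(t)}(u'(t)))' + λθ(u(t))u'(t) − λε u(t) = λ e(t) on [0,T], u(0) − u(T) = 0 = u'(0) − u'(T), satisfies |u'(t)| ≤ R₃^{1/(p_- − 1)} for all t ∈ [0,T]. -/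

import Mathlib

open Set MeasureTheory

/-- `φ_q(x) = |x|^{q-2} x` (with `φ_q(0) = 0`, automatic since `0 ^ y * 0 = 0`). -/
noncomputable def phi (q x : ℝ) : ℝ := |x| ^ (q - 2) * x

/-- sup-norm of `v` on `[0,T]`. -/
noncomputable def supNorm (T : ℝ) (v : ℝ → ℝ) : ℝ := sSup ((fun t => |v t|) '' Set.Icc 0 T)

/-- mean value `v̄ = (1/T) ∫₀ᵀ v`. -/
noncomputable def meanVal (T : ℝ) (v : ℝ → ℝ) : ℝ := (1 / T) * ∫ t in (0:ℝ)..T, v t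

/-- `v` (with derivative `v'`) is C¹ on `[0,T]`. -/
def IsC1On (T : ℝ) (v v' : ℝ → ℝ) : Prop :=
  (∀ t ∈ Set.Icc 0 T, HasDerivWithinAt v (v' t) (Set.Icc 0 T) t) ∧
    ContinuousOn v' (Set.Icc 0 T)

/-- solution of the periodic problem `(φ_{p(t)}(u'))' = F(t)` a.e. on `[0,T]`:
`u` is C¹, satisfies the periodic boundary conditions, and
`w(t) = φ_{p(t)}(u'(t))` is absolutely continuous with a.e. derivative the integrable `F`. -/
def IsAESol (T : ℝ) (p F u u' : ℝ → ℝ) : Prop :=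
  IsC1On T u u' ∧ u 0 = u T ∧ u' 0 = u' T ∧
    MeasureTheory.IntegrableOn F (Set.Icc 0 T) ∧
    ∀ t ∈ Set.Icc 0 T,
      phi (p t) (u' t) = phi (p 0) (u' 0) + ∫ s in (0:ℝ)..t, F s

lemma phi_zero (q : ℝ) : phi q 0 = 0 := by simp [phi]

lemma abs_phi (q x : ℝ) (hq : 1 < q) : |phi q x| = |x| ^ (q - 1) := by
  rcases eq_or_ne x 0 with rfl | hx
  · simp [phi, Real.zero_rpow (by linarith : q - 1 ≠ 0)]
  · have hx0 : (0:ℝ) < |x| := abs_pos.mpr hx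
    rw [phi, abs_mul, abs_of_nonneg (Real.rpow_nonneg (abs_nonneg x) _)]
    nth_rewrite 2 [← Real.rpow_one (|x|)]
    rw [← Real.rpow_add hx0]
    ring_nf

lemma phi_mul_self (q x : ℝ) (hq : 1 < q) : phi q x * x = |x| ^ q := by
  rcases eq_or_ne x 0 with rfl | hx
  · simp [phi, Real.zero_rpow (by linarith : q ≠ 0)]
  · have hx0 : (0:ℝ) < |x| := abs_pos.mpr hx
    have : x * x = |x| ^ (2:ℝ) := by
      rw [show (2:ℝ) = ((2:ℕ):ℝ) by norm_num, Real.rpow_natCast, sq_abs, sq]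
    rw [phi, mul_assoc, this, ← Real.rpow_add hx0]
    ring_nf

lemma le_root {pm A T x R : ℝ} (hpm : 1 < pm) (hT : 0 < T)
    (hR : 0 < R) (hroot : R ^ pm - A * R - T = 0) (hx : 0 ≤ x)
    (hineq : x ^ pm ≤ A * x + T) : x ≤ R := by
  by_contra hc
  push_neg at hc
  have hx0 : 0 < x := lt_trans hR hc
  set c : ℝ := R / x with hcdef
  have hc0 : 0 < c := div_pos hR hx0
  have hc1 : c < 1 := (div_lt_one hx0).mpr hc
  have hcx : c * x = R := div_mul_cancel₀ R (ne_of_gt hx0)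
  have h1 : R ^ pm = c ^ pm * x ^ pm := by
    rw [← hcx, Real.mul_rpow hc0.le hx]
  have h2 : c ^ pm ≤ c := by
    calc c ^ pm ≤ c ^ (1:ℝ) := Real.rpow_le_rpow_of_exponent_ge hc0 hc1.le hpm.le
    _ = c := Real.rpow_one c
  have h3 : R ^ pm ≤ c * (A * x + T) := by
    calc R ^ pm = c ^ pm * x ^ pm := h1
    _ ≤ c * x ^ pm := mul_le_mul_of_nonneg_right h2 (Real.rpow_nonneg hx pm)
    _ ≤ c * (A * x + T) := mul_le_mul_of_nonneg_left hineq hc0.le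
  have h4 : c * (A * x + T) = A * R + c * T := by
    rw [mul_add, ← mul_assoc, mul_comm c A, mul_assoc, hcx]
  nlinarith

lemma tri_swap {T : ℝ} {F g : ℝ → ℝ}
    (hF : IntegrableOn F (Set.Ioc 0 T)) (hg : IntegrableOn g (Set.Ioc 0 T)) :
    ∫ t in Set.Ioc 0 T, (∫ s in Set.Ioc 0 t, F s) * g t
      = ∫ s in Set.Ioc 0 T, F s * (∫ t in Set.Icc s T, g t) := by
  set μ := volume.restrict (Set.Ioc 0 T) with hμ
  set S : Set (ℝ × ℝ) := {q : ℝ × ℝ | q.2 ≤ q.1} with hS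
  have hSm : MeasurableSet S := measurableSet_le measurable_snd measurable_fst
  set h : ℝ → ℝ → ℝ := fun t s => S.indicator (fun q => F q.2 * g q.1) (t, s) with hh
  have hint : Integrable (Function.uncurry h) (μ.prod μ) := by
    have h2 : Integrable (fun z : ℝ × ℝ => F z.2 * g z.1) (μ.prod μ) := by
      simpa [mul_comm] using hg.mul_prod hF
    have h3 : Function.uncurry h = S.indicator (fun q : ℝ × ℝ => F q.2 * g q.1) := by
      funext q; cases q; rfl
    rw [h3]
    exact h2.indicator hSm
  have hswap := MeasureTheory.integral_integral_swap hint
  have hL : ∫ t, (∫ s, h t s ∂μ) ∂μ = ∫ t in Set.Ioc 0 T, (∫ s in Set.Ioc 0 t, F s) * g t := by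
    apply setIntegral_congr_fun measurableSet_Ioc
    intro t ht
    dsimp only
    have h4 : (fun s => h t s) = fun s => (Set.Iic t).indicator F s * g t := by
      funext s
      by_cases hst : s ≤ t <;> simp [hh, hS, Set.indicator_apply, hst]
    rw [h4, integral_mul_const]
    congr 1
    have h5 : Set.Iic t ∩ Set.Ioc 0 T = Set.Ioc 0 t := by
      ext x
      simp only [Set.mem_inter_iff, Set.mem_Iic, Set.mem_Ioc]
      constructor
      · rintro ⟨h1, h2, h3⟩; exact ⟨h2, h1⟩
      · rintro ⟨h1, h2⟩; exact ⟨h2, h1, le_trans h2 ht.2⟩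
    rw [hμ, integral_indicator measurableSet_Iic,
      Measure.restrict_restrict measurableSet_Iic, h5]
  have hR : ∫ s, (∫ t, h t s ∂μ) ∂μ = ∫ s in Set.Ioc 0 T, F s * (∫ t in Set.Icc s T, g t) := by
    apply setIntegral_congr_fun measurableSet_Ioc
    intro s hs
    dsimp only
    have h4 : (fun t => h t s) = fun t => F s * (Set.Ici s).indicator g t := by
      funext t
      by_cases hst : s ≤ t <;> simp [hh, hS, Set.indicator_apply, hst]
    rw [h4, integral_const_mul]
    congr 1
    have h5 : Set.Ici s ∩ Set.Ioc 0 T = Set.Icc s T := by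
      ext x
      simp only [Set.mem_inter_iff, Set.mem_Ici, Set.mem_Ioc, Set.mem_Icc]
      constructor
      · rintro ⟨h1, h2, h3⟩; exact ⟨h1, h3⟩
      · rintro ⟨h1, h2⟩; exact ⟨h1, lt_of_lt_of_le hs.1 h1, h2⟩
    rw [hμ, integral_indicator measurableSet_Ici,
      Measure.restrict_restrict measurableSet_Ici, h5]
  rw [← hL, ← hR]
  exact hswap

/-- integrable × continuous is integrable on Icc -/
lemma integrableOn_cont_mul {a b : ℝ} {f g : ℝ → ℝ}
    (hf : IntegrableOn f (Set.Icc a b)) (hg : ContinuousOn g (Set.Icc a b)) :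
    IntegrableOn (fun x => g x * f x) (Set.Icc a b) := by
  obtain ⟨C, hC⟩ := isCompact_Icc.exists_bound_of_continuousOn hg
  apply Integrable.mono' (hf.norm.const_mul C)
    ((hg.aestronglyMeasurable measurableSet_Icc).mul hf.aestronglyMeasurable)
  filter_upwards [ae_restrict_mem measurableSet_Icc] with x hx
  simp only [Pi.mul_apply, norm_mul]
  exact mul_le_mul_of_nonneg_right (hC x hx) (norm_nonneg _)

theorem stmt2 (T : ℝ) (hT : 0 < T) (p : ℝ → ℝ)
    (hp : ContinuousOn p (Set.Icc 0 T)) (hp1 : ∀ t ∈ Set.Icc 0 T, 1 < p t)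
    (hpT : p 0 = p T)
    (pm : ℝ) (hpm : pm = sInf (p '' Set.Icc 0 T))
    (θ : ℝ → ℝ) (hθ : Continuous θ)
    (e : ℝ → ℝ) (he : MeasureTheory.IntegrableOn e (Set.Icc 0 T))
    (hemean : meanVal T e = 0)
    (εs ε lam : ℝ) (hεs : 0 < εs) (hε : 0 < ε) (hεεs : ε ≤ εs)
    (hlam0 : 0 < lam) (hlam1 : lam ≤ 1)
    (R₁ : ℝ) (hR₁pos : 0 < R₁)
    (hR₁root : R₁ ^ pm - (∫ t in (0:ℝ)..T, |e t|) * T ^ ((pm - 1) / pm) * R₁ - T = 0)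
    (R₂ R₃ : ℝ) (hR₂ : R₂ = T ^ ((pm - 1) / pm) * R₁)
    (hR₃ : R₃ = max ((∫ t in (0:ℝ)..T, |e t|) +
        R₂ * sSup ((fun v => |θ v|) '' Set.Icc (-R₂) R₂) + εs * R₂ * T) 1)
    (u u' : ℝ → ℝ)
    (hu : IsAESol T p (fun t => lam * (e t - θ (u t) * u' t + ε * u t)) u u') :
    ∀ t ∈ Set.Icc 0 T, |u' t| ≤ R₃ ^ (1 / (pm - 1)) := by
  obtain ⟨⟨hder, hu'c⟩, huper, hu'per, hFint, hw⟩ := hu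
  set F : ℝ → ℝ := fun t => lam * (e t - θ (u t) * u' t + ε * u t) with hFdef
  have hIcc0 : (0:ℝ) ∈ Set.Icc 0 T := ⟨le_refl 0, hT.le⟩
  have hIccT : T ∈ Set.Icc 0 T := ⟨hT.le, le_refl T⟩
  have huIcc : Set.uIcc (0:ℝ) T = Set.Icc 0 T := uIcc_of_le hT.le
  have huc : ContinuousOn u (Set.Icc 0 T) := fun x hx => (hder x hx).continuousWithinAt
  -- pm facts
  have hpmmem : pm ∈ p '' Set.Icc 0 T := by
    rw [hpm]
    exact (isCompact_Icc.image_of_continuousOn hp).sInf_mem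
      ((Set.nonempty_Icc.mpr hT.le).image p)
  have hpm1 : 1 < pm := by
    obtain ⟨ts, hts, htseq⟩ := hpmmem
    rw [← htseq]; exact hp1 ts hts
  have hpm0 : (0:ℝ) < pm := by linarith
  have hpmle : ∀ t ∈ Set.Icc 0 T, pm ≤ p t := by
    intro t ht
    rw [hpm]
    exact csInf_le (isCompact_Icc.image_of_continuousOn hp).bddBelow
      (Set.mem_image_of_mem p ht)
  -- interior derivative
  have hderiv : ∀ x ∈ Set.Ioo (0:ℝ) T, HasDerivAt u (u' x) x := by
    intro x hx
    exact (hder x (Set.Ioo_subset_Icc_self hx)).hasDerivAt (Icc_mem_nhds hx.1 hx.2)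
  -- FTC for u
  have hftc : ∀ a ∈ Set.Icc 0 T, ∀ b ∈ Set.Icc 0 T,
      ∫ x in a..b, u' x = u b - u a := by
    intro a ha b hb
    have hsub : Set.uIcc a b ⊆ Set.Icc 0 T := Set.uIcc_subset_Icc ha hb
    apply intervalIntegral.integral_eq_sub_of_hasDeriv_right (huc.mono hsub) ?_
      ((hu'c.mono hsub).intervalIntegrable)
    intro x hx
    have hx' : x ∈ Set.Ioo (0:ℝ) T := by
      constructor
      · exact lt_of_le_of_lt (le_min ha.1 hb.1) hx.1
      · exact lt_of_lt_of_le hx.2 (max_le ha.2 hb.2)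
    exact (hderiv x hx').hasDerivWithinAt
  -- integrability facts
  have hFIoc : IntegrableOn F (Set.Ioc 0 T) := hFint.mono_set Set.Ioc_subset_Icc_self
  have hFii : IntervalIntegrable F volume 0 T := by
    rw [intervalIntegrable_iff', huIcc]; exact hFint
  have heii : IntervalIntegrable e volume 0 T := by
    rw [intervalIntegrable_iff', huIcc]; exact he
  have heIoc : IntegrableOn e (Set.Ioc 0 T) := he.mono_set Set.Ioc_subset_Icc_self
  have hu'i : IntegrableOn u' (Set.Ioc 0 T) :=
    (hu'c.integrableOn_Icc).mono_set Set.Ioc_subset_Icc_self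
  have hu'ii : IntervalIntegrable u' volume 0 T := by
    rw [intervalIntegrable_iff', huIcc]; exact hu'c.integrableOn_Icc
  have huii : IntervalIntegrable u volume 0 T := by
    rw [intervalIntegrable_iff', huIcc]; exact huc.integrableOn_Icc
  have hθuu'c : ContinuousOn (fun t => θ (u t) * u' t) (Set.Icc 0 T) :=
    ((hθ.comp_continuousOn huc).mul hu'c)
  have hθuu'ii : IntervalIntegrable (fun t => θ (u t) * u' t) volume 0 T := by
    rw [intervalIntegrable_iff', huIcc]; exact hθuu'c.integrableOn_Icc
  -- Step A : ∫ F = 0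
  have hFT0 : ∫ t in (0:ℝ)..T, F t = 0 := by
    have h1 := hw T hIccT
    rw [← hpT, ← hu'per] at h1
    linarith
  -- substitution
  have hsubst : ∀ g : ℝ → ℝ, Continuous g → ∫ t in (0:ℝ)..T, u' t * g (u t) = 0 := by
    intro g hg
    have := intervalIntegral.integral_comp_smul_deriv'' (f := u) (f' := u') (g := g)
      (by rw [huIcc]; exact huc)
      (by
        intro x hx
        have hx' : x ∈ Set.Ioo (0:ℝ) T := by
          rwa [min_eq_left hT.le, max_eq_right hT.le] at hx
        exact (hderiv x hx').hasDerivWithinAt)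
      (by rw [huIcc]; exact hu'c)
      (hg.continuousOn)
    rw [huper, intervalIntegral.integral_same] at this
    simpa [smul_eq_mul] using this
  have hθ0 : ∫ t in (0:ℝ)..T, θ (u t) * u' t = 0 := by
    rw [show (fun t => θ (u t) * u' t) = fun t => u' t * θ (u t) from funext fun t => mul_comm _ _]
    exact hsubst θ hθ
  have he0 : ∫ t in (0:ℝ)..T, e t = 0 := by
    have := hemean
    rw [meanVal] at this
    have hT' : (1:ℝ)/T ≠ 0 := by positivity
    field_simp at this
    exact this.trans (mul_zero T)
  -- mean of u is zero
  have humean : ∫ t in (0:ℝ)..T, u t = 0 := by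
    have hsplit : ∫ t in (0:ℝ)..T, F t
        = lam * ((∫ t in (0:ℝ)..T, e t) - (∫ t in (0:ℝ)..T, θ (u t) * u' t)
          + ε * ∫ t in (0:ℝ)..T, u t) := by
      rw [hFdef]
      rw [intervalIntegral.integral_const_mul]
      congr 1
      rw [intervalIntegral.integral_add (heii.sub hθuu'ii) (huii.const_mul ε),
        intervalIntegral.integral_sub heii hθuu'ii, intervalIntegral.integral_const_mul]
    rw [hFT0, he0, hθ0] at hsplit
    have : lam * (ε * ∫ t in (0:ℝ)..T, u t) = 0 := by linarith
    rcases mul_eq_zero.mp this with h | h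
    · exact absurd h (ne_of_gt hlam0)
    · rcases mul_eq_zero.mp h with h' | h'
      · exact absurd h' (ne_of_gt hε)
      · exact h'
  -- zero of u
  obtain ⟨a, haI, hamin⟩ := isCompact_Icc.exists_isMinOn ⟨0, hIcc0⟩ huc
  obtain ⟨b, hbI, hbmax⟩ := isCompact_Icc.exists_isMaxOn ⟨0, hIcc0⟩ huc
  have hua : u a ≤ 0 := by
    by_contra hcon
    push_neg at hcon
    have h1 : ∫ t in (0:ℝ)..T, u a ≤ ∫ t in (0:ℝ)..T, u t :=
      intervalIntegral.integral_mono_on hT.le intervalIntegrable_const huii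
        (fun x hx => hamin hx)
    rw [intervalIntegral.integral_const, humean, smul_eq_mul] at h1
    nlinarith
  have hub : 0 ≤ u b := by
    by_contra hcon
    push_neg at hcon
    have h1 : ∫ t in (0:ℝ)..T, u t ≤ ∫ t in (0:ℝ)..T, u b :=
      intervalIntegral.integral_mono_on hT.le huii intervalIntegrable_const
        (fun x hx => hbmax hx)
    rw [intervalIntegral.integral_const, humean, smul_eq_mul] at h1
    nlinarith
  have hzmem : (0:ℝ) ∈ Set.uIcc (u a) (u b) := by
    rw [Set.mem_uIcc]; left; exact ⟨hua, hub⟩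
  obtain ⟨t0, ht0mem, hut0⟩ :=
    intermediate_value_uIcc (huc.mono (Set.uIcc_subset_Icc haI hbI)) hzmem
  have ht0I : t0 ∈ Set.Icc 0 T := Set.uIcc_subset_Icc haI hbI ht0mem
  -- sup bound via I1
  set I1 : ℝ := ∫ t in Set.Ioc 0 T, |u' t| with hI1def
  have hu'absIoc : IntegrableOn (fun t => |u' t|) (Set.Ioc 0 T) := hu'i.abs
  have hsupu : ∀ t ∈ Set.Icc 0 T, |u t| ≤ I1 := by
    intro t ht
    have h1 : u t = ∫ x in t0..t, u' x := by
      rw [hftc t0 ht0I t ht, hut0, sub_zero]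
    have h2 : |∫ x in t0..t, u' x| ≤ ∫ x in Set.uIoc t0 t, |u' x| := by
      simpa [Real.norm_eq_abs] using
        intervalIntegral.norm_integral_le_integral_norm_uIoc (a := t0) (b := t) (f := u')
    have h3 : Set.uIoc t0 t ⊆ Set.Ioc 0 T := by
      rw [Set.uIoc]
      exact Set.Ioc_subset_Ioc (le_min ht0I.1 ht.1) (max_le ht0I.2 ht.2)
    have h4 : ∫ x in Set.uIoc t0 t, |u' x| ≤ I1 := by
      apply setIntegral_mono_set hu'absIoc
      · filter_upwards with x using abs_nonneg _
      · exact HasSubset.Subset.eventuallyLE h3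
    rw [h1]
    exact le_trans h2 h4
  have hI1nonneg : 0 ≤ I1 :=
    setIntegral_nonneg measurableSet_Ioc (fun x _ => abs_nonneg _)
  -- energy identity
  set H : ℝ → ℝ := fun t => ∫ s in Set.Ioc 0 t, F s with hHdef
  have hHc : ContinuousOn H (Set.Icc 0 T) := intervalIntegral.continuousOn_primitive hFint
  set w0 : ℝ := phi (p 0) (u' 0) with hw0def
  have hwt : ∀ t ∈ Set.Icc 0 T, phi (p t) (u' t) = w0 + H t := by
    intro t ht
    rw [hw t ht, hHdef, intervalIntegral.integral_of_le ht.1]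
  set E : ℝ := ∫ t in Set.Ioc 0 T, |u' t| ^ (p t) with hEdef
  have hIoc_sub : Set.Ioc (0:ℝ) T ⊆ Set.Icc 0 T := Set.Ioc_subset_Icc_self
  have hE1 : ∫ t in Set.Ioc 0 T, (w0 + H t) * u' t = E := by
    apply setIntegral_congr_fun measurableSet_Ioc
    intro t ht
    dsimp only
    rw [← hwt t (hIoc_sub ht), phi_mul_self _ _ (hp1 t (hIoc_sub ht))]
  have hHu'int : IntegrableOn (fun t => H t * u' t) (Set.Ioc 0 T) :=
    ((hHc.mul hu'c).integrableOn_Icc).mono_set Set.Ioc_subset_Icc_self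
  have h_u'0 : ∫ t in Set.Ioc 0 T, u' t = 0 := by
    rw [← intervalIntegral.integral_of_le hT.le, hftc 0 hIcc0 T hIccT, huper, sub_self]
  have hE2 : ∫ t in Set.Ioc 0 T, (w0 + H t) * u' t
      = ∫ t in Set.Ioc 0 T, H t * u' t := by
    have hsplit : (fun t => (w0 + H t) * u' t) = fun t => w0 * u' t + H t * u' t := by
      funext t; ring
    rw [hsplit, integral_add (hu'i.const_mul w0) hHu'int, integral_const_mul, h_u'0,
      mul_zero, zero_add]
  have hF0Ioc : ∫ s in Set.Ioc 0 T, F s = 0 := by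
    rw [← intervalIntegral.integral_of_le hT.le]; exact hFT0
  have hueint : IntegrableOn (fun s => u s * e s) (Set.Ioc 0 T) :=
    (integrableOn_cont_mul he huc).mono_set Set.Ioc_subset_Icc_self
  have hswapped : ∫ t in Set.Ioc 0 T, H t * u' t
      = ∫ s in Set.Ioc 0 T, F s * (u T - u s) := by
    rw [hHdef]
    rw [tri_swap hFIoc hu'i]
    apply setIntegral_congr_fun measurableSet_Ioc
    intro s hs
    dsimp only
    congr 1
    rw [integral_Icc_eq_integral_Ioc, ← intervalIntegral.integral_of_le hs.2,
      hftc s ⟨hs.1.le, hs.2⟩ T hIccT]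
  have hE3 : ∫ s in Set.Ioc 0 T, F s * (u T - u s)
      = - ∫ s in Set.Ioc 0 T, u s * F s := by
    have hsplit : (fun s => F s * (u T - u s)) = fun s => F s * u T - u s * F s := by
      funext s; ring
    rw [hsplit, integral_sub (hFIoc.mul_const (u T))
      ((integrableOn_cont_mul hFint huc).mono_set Set.Ioc_subset_Icc_self),
      integral_mul_const, hF0Ioc, zero_mul, zero_sub]
  set J : ℝ := ∫ s in Set.Ioc 0 T, u s * F s with hJdef
  have hEJ : E = - J := by rw [← hE1, hE2, hswapped, hE3]
  -- decompose J
  have hg2 : Continuous (fun v => θ v * v) := hθ.mul continuous_id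
  have hg2sub : ∫ s in Set.Ioc 0 T, u' s * (θ (u s) * u s) = 0 := by
    rw [← intervalIntegral.integral_of_le hT.le]
    exact hsubst (fun v => θ v * v) hg2
  have hJsplit : J = lam * (∫ s in Set.Ioc 0 T, u s * e s)
      + lam * ε * ∫ s in Set.Ioc 0 T, u s * u s := by
    have hpt : (fun s => u s * F s)
        = fun s => lam * (u s * e s) - lam * (u' s * (θ (u s) * u s))
            + lam * ε * (u s * u s) := by
      funext s; rw [hFdef]; ring
    have hi1 : IntegrableOn (fun s => lam * (u s * e s)) (Set.Ioc 0 T) :=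
      hueint.const_mul lam
    have hi2 : IntegrableOn (fun s => lam * (u' s * (θ (u s) * u s))) (Set.Ioc 0 T) :=
      (((hu'c.mul ((hθ.comp_continuousOn huc).mul huc)).integrableOn_Icc).mono_set
        Set.Ioc_subset_Icc_self).const_mul lam
    have hi3 : IntegrableOn (fun s => lam * ε * (u s * u s)) (Set.Ioc 0 T) :=
      (((huc.mul huc).integrableOn_Icc).mono_set Set.Ioc_subset_Icc_self).const_mul (lam * ε)
    have hi12 : IntegrableOn
        (fun s => lam * (u s * e s) - lam * (u' s * (θ (u s) * u s))) (Set.Ioc 0 T) :=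
      hi1.sub hi2
    rw [hJdef, hpt, integral_add hi12 hi3, integral_sub hi1 hi2,
      integral_const_mul, integral_const_mul, integral_const_mul, hg2sub, mul_zero, sub_zero]
  set Ne : ℝ := ∫ t in (0:ℝ)..T, |e t| with hNedef
  have hNeIoc : Ne = ∫ t in Set.Ioc 0 T, |e t| := intervalIntegral.integral_of_le hT.le
  have hNe0 : 0 ≤ Ne := by
    rw [hNeIoc]; exact setIntegral_nonneg measurableSet_Ioc (fun x _ => abs_nonneg _)
  have hu2 : 0 ≤ ∫ s in Set.Ioc 0 T, u s * u s :=
    setIntegral_nonneg measurableSet_Ioc (fun x _ => mul_self_nonneg _)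
  have hue_abs : |∫ s in Set.Ioc 0 T, u s * e s| ≤ I1 * Ne := by
    have h1 : |∫ s in Set.Ioc 0 T, u s * e s| ≤ ∫ s in Set.Ioc 0 T, |u s * e s| := by
      have := MeasureTheory.norm_integral_le_integral_norm
        (μ := volume.restrict (Set.Ioc 0 T)) (f := fun s => u s * e s)
      simp only [Real.norm_eq_abs] at this
      exact this
    have h2 : ∫ s in Set.Ioc 0 T, |u s * e s| ≤ ∫ s in Set.Ioc 0 T, I1 * |e s| := by
      apply setIntegral_mono_on hueint.abs (heIoc.abs.const_mul I1) measurableSet_Ioc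
      intro x hx
      rw [abs_mul]
      exact mul_le_mul_of_nonneg_right (hsupu x (hIoc_sub hx)) (abs_nonneg _)
    rw [integral_const_mul, ← hNeIoc] at h2
    exact le_trans h1 h2
  have hENe : E ≤ I1 * Ne := by
    have h1 : E ≤ lam * |∫ s in Set.Ioc 0 T, u s * e s| := by
      rw [hEJ, hJsplit]
      have h2 : - (lam * (∫ s in Set.Ioc 0 T, u s * e s)) ≤
          lam * |∫ s in Set.Ioc 0 T, u s * e s| := by
        rw [← mul_neg]
        exact mul_le_mul_of_nonneg_left (neg_le_abs _) hlam0.le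
      have h3 : 0 ≤ lam * ε * ∫ s in Set.Ioc 0 T, u s * u s :=
        mul_nonneg (mul_nonneg hlam0.le hε.le) hu2
      linarith
    calc E ≤ lam * |∫ s in Set.Ioc 0 T, u s * e s| := h1
    _ ≤ 1 * (I1 * Ne) := by
        apply mul_le_mul hlam1 hue_abs (abs_nonneg _) zero_le_one
    _ = I1 * Ne := one_mul _
  -- Hölder
  haveI hfin : IsFiniteMeasure (volume.restrict (Set.Ioc 0 T)) := by
    constructor
    rw [Measure.restrict_apply_univ]
    exact measure_Ioc_lt_top
  set q : ℝ := pm / (pm - 1) with hqdef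
  have hpq : pm.HolderConjugate q := by
    rw [Real.holderConjugate_iff]
    refine ⟨hpm1, ?_⟩
    rw [hqdef]
    field_simp
    ring
  have hconj : 1 / q = (pm - 1) / pm := by rw [hqdef, one_div, inv_div]
  obtain ⟨C, hC⟩ := isCompact_Icc.exists_bound_of_continuousOn hu'c.abs
  have hmem : MemLp (fun t => |u' t|) (ENNReal.ofReal pm)
      (volume.restrict (Set.Ioc 0 T)) := by
    apply MemLp.of_bound
      ((hu'c.abs.mono hIoc_sub).aestronglyMeasurable measurableSet_Ioc) C
    filter_upwards [ae_restrict_mem measurableSet_Ioc] with x hx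
    exact hC x (hIoc_sub hx)
  have hmem1 : MemLp (fun _ : ℝ => (1:ℝ)) (ENNReal.ofReal q)
      (volume.restrict (Set.Ioc 0 T)) := memLp_const 1
  have hhold := MeasureTheory.integral_mul_le_Lp_mul_Lq_of_nonneg hpq
    (f := fun t => |u' t|) (g := fun _ => (1:ℝ))
    (Filter.Eventually.of_forall fun x => abs_nonneg _)
    (Filter.Eventually.of_forall fun x => zero_le_one) hmem hmem1
  have hTtoReal : volume.real (Set.Ioc (0:ℝ) T) = T := by
    rw [measureReal_def, Real.volume_Ioc, sub_zero, ENNReal.toReal_ofReal hT.le]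
  have h1q : ∫ a in Set.Ioc 0 T, (1:ℝ) ^ q = T := by
    simp only [Real.one_rpow]
    rw [setIntegral_const, smul_eq_mul, mul_one, hTtoReal]
  set Tα : ℝ := T ^ ((pm - 1) / pm) with hTαdef
  have hTα0 : 0 ≤ Tα := Real.rpow_nonneg hT.le _
  set Y : ℝ := ∫ t in Set.Ioc 0 T, |u' t| ^ pm with hYdef
  have hY0 : 0 ≤ Y :=
    setIntegral_nonneg measurableSet_Ioc fun x _ => Real.rpow_nonneg (abs_nonneg _) _
  set X : ℝ := Y ^ (1 / pm) with hXdef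
  have hX0 : 0 ≤ X := Real.rpow_nonneg hY0 _
  have hI1X : I1 ≤ X * Tα := by
    have h2 : ∫ a in Set.Ioc 0 T, |u' a| * 1 = I1 := by
      simp only [mul_one, hI1def]
    rw [h2, h1q, hconj] at hhold
    exact hhold
  have hXpow : X ^ pm = Y := by
    rw [hXdef, ← Real.rpow_mul hY0, one_div, inv_mul_cancel₀ (ne_of_gt hpm0),
      Real.rpow_one]
  have hYle : Y ≤ E + T := by
    have hint1 : IntegrableOn (fun t => |u' t| ^ pm) (Set.Ioc 0 T) :=
      ((hu'c.abs.rpow_const fun x _ => Or.inr hpm0.le).integrableOn_Icc).mono_set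
        Set.Ioc_subset_Icc_self
    have hcontE : ContinuousOn (fun t => |u' t| ^ (p t)) (Set.Icc 0 T) := by
      apply ContinuousOn.rpow hu'c.abs hp
      intro x hx
      exact Or.inr (by linarith [hp1 x hx])
    have hint2 : IntegrableOn (fun t => |u' t| ^ (p t) + 1) (Set.Ioc 0 T) :=
      ((hcontE.integrableOn_Icc).mono_set Set.Ioc_subset_Icc_self).add
        (integrableOn_const measure_Ioc_lt_top.ne)
    have h3 : Y ≤ ∫ t in Set.Ioc 0 T, (|u' t| ^ (p t) + 1) := by
      rw [hYdef]
      apply setIntegral_mono_on hint1 hint2 measurableSet_Ioc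
      intro x hx
      by_cases hcase : |u' x| ≤ 1
      · have h4 : |u' x| ^ pm ≤ 1 := Real.rpow_le_one (abs_nonneg _) hcase hpm0.le
        have h5 : 0 ≤ |u' x| ^ (p x) := Real.rpow_nonneg (abs_nonneg _) _
        linarith
      · push_neg at hcase
        have h4 : |u' x| ^ pm ≤ |u' x| ^ (p x) :=
          Real.rpow_le_rpow_of_exponent_le hcase.le (hpmle x (hIoc_sub hx))
        linarith
    have h4 : ∫ t in Set.Ioc 0 T, (|u' t| ^ (p t) + 1) = E + T := by
      rw [integral_add ((hcontE.integrableOn_Icc).mono_set Set.Ioc_subset_Icc_self)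
        (integrableOn_const measure_Ioc_lt_top.ne),
        setIntegral_const, smul_eq_mul, mul_one, hTtoReal]
    rw [h4] at h3
    exact h3
  have hXineq : X ^ pm ≤ Ne * Tα * X + T := by
    have h5 : E ≤ (X * Tα) * Ne := le_trans hENe
      (mul_le_mul_of_nonneg_right hI1X hNe0)
    rw [hXpow]
    have h6 : X * Tα * Ne = Ne * Tα * X := by ring
    linarith
  have hXR1 : X ≤ R₁ := le_root hpm1 hT hR₁pos (by linarith [hR₁root]) hX0 hXineq
  have hI1R2 : I1 ≤ R₂ := by
    calc I1 ≤ X * Tα := hI1X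
    _ ≤ R₁ * Tα := mul_le_mul_of_nonneg_right hXR1 hTα0
    _ = R₂ := by rw [hR₂, mul_comm]
  have hR2pos : 0 < R₂ := by
    rw [hR₂]
    exact mul_pos (Real.rpow_pos_of_pos hT _) hR₁pos
  -- bound on K = ∫ |F|
  set M : ℝ := sSup ((fun v => |θ v|) '' Set.Icc (-R₂) R₂) with hMdef
  have hM : ∀ v : ℝ, |v| ≤ R₂ → |θ v| ≤ M := by
    intro v hv
    apply le_csSup (isCompact_Icc.bddAbove_image (hθ.abs.continuousOn))
    exact ⟨v, Set.mem_Icc.mpr (abs_le.mp hv), rfl⟩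
  have hM0 : 0 ≤ M := le_trans (abs_nonneg (θ 0)) (hM 0 (by simpa using hR2pos.le))
  set K : ℝ := ∫ t in Set.Ioc 0 T, |F t| with hKdef
  have hiA : IntegrableOn (fun t => |e t| + M * |u' t|) (Set.Ioc 0 T) :=
    heIoc.abs.add (hu'absIoc.const_mul M)
  have hintRHS : IntegrableOn (fun t => |e t| + M * |u' t| + ε * R₂) (Set.Ioc 0 T) :=
    hiA.add (integrableOn_const measure_Ioc_lt_top.ne)
  have hKb : K ≤ Ne + M * I1 + ε * R₂ * T := by
    have h1 : K ≤ ∫ t in Set.Ioc 0 T, (|e t| + M * |u' t| + ε * R₂) := by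
      rw [hKdef]
      apply setIntegral_mono_on hFIoc.abs hintRHS measurableSet_Ioc
      intro x hx
      have hxI : x ∈ Set.Icc 0 T := hIoc_sub hx
      have huxR : |u x| ≤ R₂ := le_trans (hsupu x hxI) hI1R2
      have hθx : |θ (u x)| ≤ M := hM (u x) huxR
      have h2 : |e x - θ (u x) * u' x + ε * u x|
          ≤ |e x| + M * |u' x| + ε * R₂ := by
        calc |e x - θ (u x) * u' x + ε * u x|
            ≤ |e x - θ (u x) * u' x| + |ε * u x| := abs_add_le _ _
        _ ≤ (|e x| + |θ (u x) * u' x|) + |ε * u x| := by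
            gcongr
            exact abs_sub _ _
        _ ≤ |e x| + M * |u' x| + ε * R₂ := by
            rw [abs_mul, abs_mul, abs_of_pos hε]
            have := mul_le_mul_of_nonneg_right hθx (abs_nonneg (u' x))
            have := mul_le_mul_of_nonneg_left huxR hε.le
            linarith
      have h3 : |F x| = lam * |e x - θ (u x) * u' x + ε * u x| := by
        rw [hFdef]
        dsimp only
        rw [abs_mul, abs_of_pos hlam0]
      rw [h3]
      calc lam * |e x - θ (u x) * u' x + ε * u x|
          ≤ 1 * (|e x| + M * |u' x| + ε * R₂) := by
            apply mul_le_mul hlam1 h2 (abs_nonneg _) zero_le_one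
      _ = |e x| + M * |u' x| + ε * R₂ := one_mul _
    have h4 : ∫ t in Set.Ioc 0 T, (|e t| + M * |u' t| + ε * R₂)
        = Ne + M * I1 + ε * R₂ * T := by
      rw [integral_add hiA (integrableOn_const measure_Ioc_lt_top.ne),
        integral_add heIoc.abs (hu'absIoc.const_mul M), integral_const_mul,
        setIntegral_const, smul_eq_mul, hTtoReal, ← hNeIoc, ← hI1def]
      ring
    rw [h4] at h1
    exact h1
  have hK0 : 0 ≤ K := setIntegral_nonneg measurableSet_Ioc fun x _ => abs_nonneg _
  have hKR3 : K ≤ R₃ := by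
    have h1 : K ≤ Ne + R₂ * M + εs * R₂ * T := by
      have h2 : M * I1 ≤ R₂ * M := by
        rw [mul_comm R₂ M]
        exact mul_le_mul_of_nonneg_left hI1R2 hM0
      have h3 : ε * R₂ * T ≤ εs * R₂ * T := by
        apply mul_le_mul_of_nonneg_right (mul_le_mul_of_nonneg_right hεεs hR2pos.le) hT.le
      linarith
    rw [hR₃]
    exact le_trans h1 (le_max_left _ _)
  have hR31 : (1:ℝ) ≤ R₃ := by rw [hR₃]; exact le_max_right _ _
  -- Rolle
  obtain ⟨τ, hτmem, hτ0⟩ := exists_hasDerivAt_eq_zero hT huc huper hderiv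
  have hτI : τ ∈ Set.Icc 0 T := Set.Ioo_subset_Icc_self hτmem
  -- conclusion
  intro t ht
  have hwt2 : phi (p t) (u' t) = ∫ s in τ..t, F s := by
    have h1 := hw t ht
    have h2 := hw τ hτI
    rw [hτ0, phi_zero] at h2
    have h3 : (∫ s in (0:ℝ)..t, F s) - ∫ s in (0:ℝ)..τ, F s = ∫ s in τ..t, F s :=
      intervalIntegral.integral_interval_sub_left
        (hFii.mono_set (by rw [huIcc]; exact Set.uIcc_subset_Icc hIcc0 ht))
        (hFii.mono_set (by rw [huIcc]; exact Set.uIcc_subset_Icc hIcc0 hτI))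
    linarith
  have habsw : |u' t| ^ (p t - 1) ≤ K := by
    rw [← abs_phi _ _ (hp1 t ht), hwt2]
    have h2 : |∫ s in τ..t, F s| ≤ ∫ s in Set.uIoc τ t, |F s| := by
      have := intervalIntegral.norm_integral_le_integral_norm_uIoc
        (a := τ) (b := t) (f := F) (μ := volume)
      simpa [Real.norm_eq_abs] using this
    have h3 : Set.uIoc τ t ⊆ Set.Ioc 0 T := by
      rw [Set.uIoc]
      exact Set.Ioc_subset_Ioc (le_min hτI.1 ht.1) (max_le hτI.2 ht.2)
    have h4 : ∫ s in Set.uIoc τ t, |F s| ≤ K := by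
      apply setIntegral_mono_set hFIoc.abs
      · filter_upwards with x using abs_nonneg _
      · exact HasSubset.Subset.eventuallyLE h3
    linarith
  have habs3 : |u' t| ^ (p t - 1) ≤ R₃ := le_trans habsw hKR3
  by_cases hcase : |u' t| ≤ 1
  · apply le_trans hcase
    exact Real.one_le_rpow hR31 (div_nonneg zero_le_one (by linarith))
  · push_neg at hcase
    have h5 : |u' t| ^ (pm - 1) ≤ |u' t| ^ (p t - 1) :=
      Real.rpow_le_rpow_of_exponent_le hcase.le (by linarith [hpmle t ht])
    have h6 : |u' t| ^ (pm - 1) ≤ R₃ := le_trans h5 habs3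
    have h7 : (|u' t| ^ (pm - 1)) ^ (1/(pm-1)) ≤ R₃ ^ (1/(pm-1)) :=
      Real.rpow_le_rpow (Real.rpow_nonneg (abs_nonneg _) _) h6
        (div_nonneg zero_le_one (by linarith))
    rwa [← Real.rpow_mul (abs_nonneg _), mul_one_div,
      div_self (by intro hcon; linarith [hcon] : pm - 1 ≠ 0), Real.rpow_one] at h7
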